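/- Let G be a graph on n vertices and V an n×(n-1) matrix with V^T e = 0, V^T V = I. For each pair {i,j}, i<j, let M^{ij} = -½ V^T E^{ij} V, where E^{ij} is the symmetric matrix with 1 in positions (i,j), (j,i) and 0 elsewhere. Then the set { M^{ij} : {i,j} a missing edge of G } is linearly independent, and it is a basis of the null space of the linear map X ↦ H ∘ K_V(X), where H is the adjacency matrix of G, K_V(X) = diag(VXV^T)e^T + e diag(VXV^T)^T - 2VXV^T, and ∘ is the Hadamard product. -/

import Mathlib

open Matrix BigOperators

/-- `E^{ij}`: the symmetric matrix with 1's in entries `(i,j)` and `(j,i)`, 0 elsewhere. -/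
def Eij {n : ℕ} (i j : Fin n) : Matrix (Fin n) (Fin n) ℝ :=
  Matrix.single i j 1 + Matrix.single j i 1

lemma Eij_apply {n : ℕ} (i j k l : Fin n) :
    Eij i j k l = (if i = k ∧ j = l then 1 else 0) + (if j = k ∧ i = l then 1 else 0) := by
  simp [Eij, Matrix.single]

lemma mul_Eij_mul {n : ℕ} {α β : Type*} [Fintype α] [Fintype β]
    (A : Matrix α (Fin n) ℝ) (B : Matrix (Fin n) β ℝ) (i j : Fin n) (k : α) (l : β) :
    (A * Eij i j * B) k l = A k i * B j l + A k j * B i l := by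
  simp [Matrix.mul_apply, Eij_apply, Finset.sum_mul, mul_ite, ite_and, mul_add, add_mul,
    Finset.sum_add_distrib, Finset.mul_sum]

lemma VVt_apply {n : ℕ} (hn : 0 < n) (V : Matrix (Fin n) (Fin (n - 1)) ℝ)
    (hVe : Vᵀ *ᵥ (fun _ => (1 : ℝ)) = 0) (hVV : Vᵀ * V = 1) (k l : Fin n) :
    (V * Vᵀ) k l = (if k = l then 1 else 0) - 1 / n := by
  set c : ℝ := (Real.sqrt n)⁻¹ with hc
  have hn' : (n : ℝ) ≠ 0 := Nat.cast_ne_zero.mpr hn.ne'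
  have hcc : c * c = 1 / n := by
    rw [hc, ← mul_inv, Real.mul_self_sqrt (Nat.cast_nonneg n), one_div]
  set W : Matrix (Fin n) (Fin (n - 1) ⊕ Unit) ℝ :=
    Matrix.of fun i x => Sum.elim (fun j => V i j) (fun _ => c) x with hW
  have e : Fin (n - 1) ⊕ Unit ≃ Fin n := by
    refine Fintype.equivOfCardEq ?_
    simp [Fintype.card_sum]
    omega
  have h1 : Wᵀ * W = 1 := by
    ext a b
    rcases a with a | a <;> rcases b with b | b
    · have := congrFun (congrFun hVV a) b
      simpa [Matrix.mul_apply, hW, Matrix.one_apply] using this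
    · have := congrFun hVe a
      simp only [Matrix.mulVec, dotProduct, mul_one, Pi.zero_apply,
        Matrix.transpose_apply] at this
      simp [Matrix.mul_apply, hW, ← Finset.sum_mul, this, Matrix.one_apply]
    · have := congrFun hVe b
      simp only [Matrix.mulVec, dotProduct, mul_one, Pi.zero_apply,
        Matrix.transpose_apply] at this
      simp [Matrix.mul_apply, hW, ← Finset.mul_sum, this, Matrix.one_apply]
    · simp [Matrix.mul_apply, hW, hcc, Matrix.one_apply, hn']
  have h2 : W * Wᵀ = 1 := (Matrix.mul_eq_one_comm_of_equiv e).mp h1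
  have := congrFun (congrFun h2 k) l
  simp only [Matrix.mul_apply, Fintype.sum_sum_type, Matrix.one_apply] at this
  simp only [Matrix.mul_apply, Matrix.transpose_apply]
  have hsum : ∑ j, W k (Sum.inl j) * Wᵀ (Sum.inl j) l = ∑ j, V k j * V l j := by
    simp [hW]
  rw [hsum] at this
  simp only [hW, Matrix.transpose_apply] at this ⊢
  simp only [Matrix.of_apply, Sum.elim_inr] at this
  rw [← hcc]
  simp at this ⊢
  linarith [this]

noncomputable def phiMap {n : ℕ} (V : Matrix (Fin n) (Fin (n - 1)) ℝ) :
    Matrix (Fin (n - 1)) (Fin (n - 1)) ℝ →ₗ[ℝ] Matrix (Fin n) (Fin n) ℝ where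
  toFun X := Matrix.of fun i j =>
    (V * X * Vᵀ) i i + (V * X * Vᵀ) j j - 2 * (V * X * Vᵀ) i j
  map_add' X Y := by
    ext i j
    simp [Matrix.mul_add, Matrix.add_mul]
    ring
  map_smul' c X := by
    ext i j
    simp [Matrix.mul_smul, Matrix.smul_mul]
    ring

lemma aux_alg (c A B C D : ℝ) (hAB : A * B = 0) (hCD : C * D = 0) :
    -(1/2) * ((A - c) * (B - c) + (B - c) * (A - c))
      + -(1/2) * ((C - c) * (D - c) + (D - c) * (C - c))
      - 2 * (-(1/2) * ((A - c) * (D - c) + (B - c) * (C - c)))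
    = A * D + B * C := by linear_combination -hAB - hCD

lemma phi_M {n : ℕ} (hn : 0 < n) (V : Matrix (Fin n) (Fin (n - 1)) ℝ)
    (hVe : Vᵀ *ᵥ (fun _ => (1 : ℝ)) = 0) (hVV : Vᵀ * V = 1) (i j : Fin n) (hij : i ≠ j) :
    phiMap V ((-(1/2) : ℝ) • (Vᵀ * Eij i j * V)) = Eij i j := by
  set χ : Fin n → Fin n → ℝ := fun a b => if a = b then 1 else 0 with hχ
  have hχs : ∀ a b : Fin n, χ a b = χ b a := by
    intro a b
    simp only [hχ]
    by_cases h : a = b <;> simp [h, Ne.symm]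
  have hY : ∀ k l : Fin n,
      (V * ((-(1/2) : ℝ) • (Vᵀ * Eij i j * V)) * Vᵀ) k l
        = (-(1/2) : ℝ) * ((V * Vᵀ) * Eij i j * (V * Vᵀ)) k l := by
    intro k l
    rw [Matrix.mul_smul, Matrix.smul_mul]
    simp only [Matrix.smul_apply, smul_eq_mul]
    congr 1
    rw [← Matrix.mul_assoc, ← Matrix.mul_assoc, ← Matrix.mul_assoc, Matrix.mul_assoc (V * Vᵀ)]
  have hPEP : ∀ k l : Fin n,
      ((V * Vᵀ) * Eij i j * (V * Vᵀ)) k l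
        = (χ k i - 1 / n) * (χ l j - 1 / n) + (χ k j - 1 / n) * (χ l i - 1 / n) := by
    intro k l
    rw [mul_Eij_mul]
    simp only [VVt_apply hn V hVe hVV]
    rw [hχs l j, hχs l i]
  have hE : ∀ k l : Fin n, Eij i j k l = χ k i * χ l j + χ k j * χ l i := by
    intro k l
    rw [Eij_apply]
    simp only [hχ]
    by_cases h1 : i = k <;> by_cases h2 : j = l <;> by_cases h3 : j = k <;>
      by_cases h4 : i = l <;> simp [h1, h2, h3, h4, Ne.symm, eq_comm] <;> split_ifs <;> simp_all
  have hAB : ∀ k : Fin n, χ k i * χ k j = 0 := by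
    intro k
    simp only [hχ]
    by_cases h1 : k = i <;> by_cases h2 : k = j <;> simp [h1, h2, hij, hij.symm]
  ext k l
  simp only [phiMap, LinearMap.coe_mk, AddHom.coe_mk, Matrix.of_apply, hY, hPEP, hE]
  exact aux_alg (1 / n) (χ k i) (χ k j) (χ l i) (χ l j) (hAB k) (hAB l)

lemma sumV_eq_zero {n : ℕ} (V : Matrix (Fin n) (Fin (n - 1)) ℝ)
    (hVe : Vᵀ *ᵥ (fun _ => (1 : ℝ)) = 0) (b : Fin (n - 1)) : ∑ l, V l b = 0 := by
  have := congrFun hVe b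
  simpa [Matrix.mulVec, dotProduct] using this

lemma recover {n : ℕ} (V : Matrix (Fin n) (Fin (n - 1)) ℝ)
    (hVe : Vᵀ *ᵥ (fun _ => (1 : ℝ)) = 0) (hVV : Vᵀ * V = 1)
    (X : Matrix (Fin (n - 1)) (Fin (n - 1)) ℝ) :
    (-(1/2) : ℝ) • (Vᵀ * phiMap V X * V) = X := by
  set Y := V * X * Vᵀ with hYdef
  have hdec : (phiMap V X : Matrix (Fin n) (Fin n) ℝ)
      = Matrix.vecMulVec (fun k => Y k k) (fun _ => 1)
        + Matrix.vecMulVec (fun _ => 1) (fun l => Y l l) - (2:ℝ) • Y := by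
    ext k l
    simp [phiMap, Matrix.vecMulVec_apply, hYdef]
  have key1 : ∀ (d : Fin n → ℝ), Vᵀ * Matrix.vecMulVec d (fun _ : Fin n => (1:ℝ)) * V = 0 := by
    intro d
    ext a b
    simp only [Matrix.mul_apply, Matrix.vecMulVec_apply, mul_one, Matrix.transpose_apply,
      Matrix.zero_apply]
    rw [← Finset.mul_sum, sumV_eq_zero V hVe b, mul_zero]
  have key2 : ∀ (d : Fin n → ℝ), Vᵀ * Matrix.vecMulVec (fun _ : Fin n => (1:ℝ)) d * V = 0 := by
    intro d
    ext a b
    simp only [Matrix.mul_apply, Matrix.vecMulVec_apply, one_mul, Matrix.transpose_apply,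
      Matrix.zero_apply]
    apply Finset.sum_eq_zero
    intro l _
    rw [← Finset.sum_mul, sumV_eq_zero V hVe a, zero_mul, zero_mul]
  have hYX : Vᵀ * Y * V = X := by
    calc Vᵀ * Y * V = (Vᵀ * V) * X * (Vᵀ * V) := by
          rw [hYdef]; simp only [Matrix.mul_assoc]
    _ = X := by rw [hVV, Matrix.one_mul, Matrix.mul_one]
  rw [hdec, Matrix.mul_sub, Matrix.sub_mul, Matrix.mul_add, Matrix.add_mul,
    key1, key2, Matrix.mul_smul, Matrix.smul_mul, hYX]
  ext a b
  simp

lemma decomp (n : ℕ) (G : SimpleGraph (Fin n)) [DecidableRel G.Adj]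
    (B : Matrix (Fin n) (Fin n) ℝ)
    (hsym : ∀ a b, B a b = B b a) (hdiag : ∀ a, B a a = 0)
    (hadj : ∀ a b, G.Adj a b → B a b = 0) :
    B = ∑ q : {q : Fin n × Fin n // q.1 < q.2 ∧ ¬ G.Adj q.1 q.2},
      B q.1.1 q.1.2 • Eij q.1.1 q.1.2 := by
  ext a b
  simp only [Matrix.sum_apply, Matrix.smul_apply, smul_eq_mul]
  rcases lt_trichotomy a b with hab | rfl | hab
  · by_cases hG : G.Adj a b
    · rw [hadj a b hG, Finset.sum_eq_zero]
      intro q _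
      rw [Eij_apply]
      have h1 : ¬(q.1.1 = a ∧ q.1.2 = b) := by
        rintro ⟨e1, e2⟩
        exact q.2.2 (e1 ▸ e2 ▸ hG)
      have h2 : ¬(q.1.2 = a ∧ q.1.1 = b) := by
        rintro ⟨e1, e2⟩
        have h := q.2.1
        rw [e1, e2] at h
        exact absurd (hab.trans h) (lt_irrefl _)
      simp [h1, h2]
    · rw [Finset.sum_eq_single (⟨(a, b), hab, hG⟩ :
          {q : Fin n × Fin n // q.1 < q.2 ∧ ¬ G.Adj q.1 q.2})]
      · rw [Eij_apply]
        have h1 : a ≠ b := ne_of_lt hab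
        simp [h1]
      · intro q _ hq
        rw [Eij_apply]
        have h1 : ¬(q.1.1 = a ∧ q.1.2 = b) := by
          rintro ⟨e1, e2⟩
          exact hq (Subtype.ext (Prod.ext e1 e2))
        have h2 : ¬(q.1.2 = a ∧ q.1.1 = b) := by
          rintro ⟨e1, e2⟩
          have h := q.2.1
          rw [e1, e2] at h
          exact absurd (hab.trans h) (lt_irrefl _)
        simp [h1, h2]
      · intro hq; exact absurd (Finset.mem_univ _) hq
  · rw [hdiag a, Finset.sum_eq_zero]
    intro q _
    rw [Eij_apply]
    have h1 : ¬(q.1.1 = a ∧ q.1.2 = a) := by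
      rintro ⟨e1, e2⟩
      have h := q.2.1
      rw [e1, e2] at h
      exact absurd h (lt_irrefl a)
    have h2 : ¬(q.1.2 = a ∧ q.1.1 = a) := by
      rintro ⟨e1, e2⟩
      have h := q.2.1
      rw [e1, e2] at h
      exact absurd h (lt_irrefl a)
    simp [h1, h2]
  · by_cases hG : G.Adj b a
    · rw [hsym a b, hadj b a hG, Finset.sum_eq_zero]
      intro q _
      rw [Eij_apply]
      have h1 : ¬(q.1.1 = a ∧ q.1.2 = b) := by
        rintro ⟨e1, e2⟩
        have h := q.2.1
        rw [e1, e2] at h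
        exact absurd (hab.trans h) (lt_irrefl _)
      have h2 : ¬(q.1.2 = a ∧ q.1.1 = b) := by
        rintro ⟨e1, e2⟩
        exact q.2.2 (e2 ▸ e1 ▸ hG)
      simp [h1, h2]
    · rw [Finset.sum_eq_single (⟨(b, a), hab, hG⟩ :
          {q : Fin n × Fin n // q.1 < q.2 ∧ ¬ G.Adj q.1 q.2})]
      · rw [Eij_apply]
        have h1 : b ≠ a := ne_of_lt hab
        simp [h1, hsym a b]
      · intro q _ hq
        rw [Eij_apply]
        have h1 : ¬(q.1.1 = a ∧ q.1.2 = b) := by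
          rintro ⟨e1, e2⟩
          have h := q.2.1
          rw [e1, e2] at h
          exact absurd (hab.trans h) (lt_irrefl _)
        have h2 : ¬(q.1.2 = a ∧ q.1.1 = b) := by
          rintro ⟨e1, e2⟩
          exact hq (Subtype.ext (Prod.ext e2 e1))
        simp [h1, h2]
      · intro hq; exact absurd (Finset.mem_univ _) hq

/-- The matrices `M^{ij} = -½ Vᵀ E^{ij} V` over the missing edges of `G` are linearly
independent, and they form a basis of the null space of `X ↦ H ∘ K_V(X)` on
symmetric matrices of order `n-1`. -/
theorem stmt5 (n : ℕ) (G : SimpleGraph (Fin n)) [DecidableRel G.Adj]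
    (V : Matrix (Fin n) (Fin (n - 1)) ℝ)
    (hVe : Vᵀ *ᵥ (fun _ => (1 : ℝ)) = 0) (hVV : Vᵀ * V = 1)
    (M : {q : Fin n × Fin n // q.1 < q.2 ∧ ¬ G.Adj q.1 q.2} →
        Matrix (Fin (n - 1)) (Fin (n - 1)) ℝ)
    (hM : ∀ q, M q = (-(1/2) : ℝ) • (Vᵀ * Eij q.1.1 q.1.2 * V)) :
    LinearIndependent ℝ M ∧
    ∀ X : Matrix (Fin (n - 1)) (Fin (n - 1)) ℝ, X.IsSymm →
      (Matrix.hadamard (Matrix.of fun i j => if G.Adj i j then (1 : ℝ) else 0)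
          (Matrix.of fun i j =>
            (V * X * Vᵀ) i i + (V * X * Vᵀ) j j - 2 * (V * X * Vᵀ) i j) = 0 ↔
        X ∈ Submodule.span ℝ (Set.range M)) := by
  have hΦ : ∀ X : Matrix (Fin (n-1)) (Fin (n-1)) ℝ,
      (Matrix.of fun i j =>
          (V * X * Vᵀ) i i + (V * X * Vᵀ) j j - 2 * (V * X * Vᵀ) i j) = phiMap V X :=
    fun X => rfl
  set H : Matrix (Fin n) (Fin n) ℝ :=
    Matrix.of fun i j => if G.Adj i j then (1 : ℝ) else 0 with hHdef
  have hphiM : ∀ q : {q : Fin n × Fin n // q.1 < q.2 ∧ ¬ G.Adj q.1 q.2},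
      phiMap V (M q) = Eij q.1.1 q.1.2 := by
    intro q
    rw [hM q]
    exact phi_M q.1.1.pos V hVe hVV _ _ (ne_of_lt q.2.1)
  constructor
  · rw [Fintype.linearIndependent_iff]
    intro g hg q0
    have hphi : ∑ q : {q : Fin n × Fin n // q.1 < q.2 ∧ ¬ G.Adj q.1 q.2},
        g q • Eij q.1.1 q.1.2 = (0 : Matrix (Fin n) (Fin n) ℝ) := by
      have h2 := congrArg (phiMap V) hg
      rw [map_sum, map_zero] at h2
      rw [← h2]
      apply Finset.sum_congr rfl
      intro q _
      rw [_root_.map_smul, hphiM q]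
    have h := congrFun (congrFun hphi q0.1.1) q0.1.2
    simp only [Matrix.sum_apply, Matrix.smul_apply, smul_eq_mul, Matrix.zero_apply] at h
    rw [Finset.sum_eq_single q0] at h
    · rw [Eij_apply] at h
      have h1 : q0.1.1 ≠ q0.1.2 := ne_of_lt q0.2.1
      simp [h1] at h
      exact h
    · intro q _ hq
      rw [Eij_apply]
      have h1 : ¬(q.1.1 = q0.1.1 ∧ q.1.2 = q0.1.2) := by
        rintro ⟨e1, e2⟩
        exact hq (Subtype.ext (Prod.ext e1 e2))
      have h2 : ¬(q.1.2 = q0.1.1 ∧ q.1.1 = q0.1.2) := by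
        rintro ⟨e1, e2⟩
        have hh := q.2.1
        rw [e1, e2] at hh
        exact absurd (q0.2.1.trans hh) (lt_irrefl _)
      simp [h1, h2]
    · intro hq; exact absurd (Finset.mem_univ q0) hq
  · intro X hX
    rw [hΦ X]
    constructor
    · intro h0
      have hYs : ∀ a b, (V * X * Vᵀ) a b = (V * X * Vᵀ) b a := by
        intro a b
        have ht : (V * X * Vᵀ)ᵀ = V * X * Vᵀ := by
          rw [Matrix.transpose_mul, Matrix.transpose_mul, Matrix.transpose_transpose, hX.eq,
            ← Matrix.mul_assoc]
        have := congrFun (congrFun ht b) a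
        rw [Matrix.transpose_apply] at this
        exact this
      have hBsym : ∀ a b, phiMap V X a b = phiMap V X b a := by
        intro a b
        simp only [phiMap, LinearMap.coe_mk, AddHom.coe_mk, Matrix.of_apply, hYs a b]
        ring
      have hBdiag : ∀ a, phiMap V X a a = 0 := by
        intro a
        simp only [phiMap, LinearMap.coe_mk, AddHom.coe_mk, Matrix.of_apply]
        ring
      have hBadj : ∀ a b, G.Adj a b → phiMap V X a b = 0 := by
        intro a b hGab
        have h := congrFun (congrFun h0 a) b
        simp only [Matrix.hadamard_apply, hHdef, Matrix.of_apply, if_pos hGab, one_mul,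
          Matrix.zero_apply] at h
        exact h
      have hB := decomp n G (phiMap V X) hBsym hBdiag hBadj
      have hXsum : X = ∑ q : {q : Fin n × Fin n // q.1 < q.2 ∧ ¬ G.Adj q.1 q.2},
          (phiMap V X) q.1.1 q.1.2 • M q := by
        calc X = (-(1/2) : ℝ) • (Vᵀ * phiMap V X * V) := (recover V hVe hVV X).symm
        _ = (-(1/2) : ℝ) • (Vᵀ * (∑ q : {q : Fin n × Fin n // q.1 < q.2 ∧ ¬ G.Adj q.1 q.2},
              (phiMap V X) q.1.1 q.1.2 • Eij q.1.1 q.1.2) * V) := by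
            exact congrArg _ (congrArg (· * V) (congrArg (Vᵀ * ·) hB))
        _ = ∑ q : {q : Fin n × Fin n // q.1 < q.2 ∧ ¬ G.Adj q.1 q.2},
              (phiMap V X) q.1.1 q.1.2 • M q := by
            rw [Matrix.mul_sum, Matrix.sum_mul, Finset.smul_sum]
            apply Finset.sum_congr rfl
            intro q _
            rw [hM q, Matrix.mul_smul, Matrix.smul_mul, smul_comm]
      rw [hXsum]
      exact Submodule.sum_mem _ fun q _ =>
        Submodule.smul_mem _ _ (Submodule.subset_span ⟨q, rfl⟩)
    · intro hmem
      let N : Submodule ℝ (Matrix (Fin (n - 1)) (Fin (n - 1)) ℝ) :=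
        { carrier := {Z | Matrix.hadamard H (phiMap V Z) = 0}
          add_mem' := by
            intro a b ha hb
            simp only [Set.mem_setOf_eq] at *
            rw [map_add, Matrix.hadamard_add, ha, hb, add_zero]
          zero_mem' := by
            simp only [Set.mem_setOf_eq, map_zero, Matrix.hadamard_zero]
          smul_mem' := by
            intro c x hx
            simp only [Set.mem_setOf_eq] at *
            rw [_root_.map_smul, Matrix.hadamard_smul, hx, smul_zero] }
      have hgen : Set.range M ⊆ N := by
        rintro _ ⟨q, rfl⟩
        show Matrix.hadamard H (phiMap V (M q)) = 0
        rw [hphiM q]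
        ext a b
        rw [Matrix.hadamard_apply, Eij_apply]
        by_cases h1 : q.1.1 = a ∧ q.1.2 = b
        · have hna : ¬ G.Adj a b := h1.1 ▸ h1.2 ▸ q.2.2
          have h2 : ¬(q.1.2 = a ∧ q.1.1 = b) := by
            rintro ⟨e1, e2⟩
            have hh := q.2.1
            rw [e1, e2] at hh
            have hh2 := q.2.1
            rw [h1.1, h1.2] at hh2
            exact absurd (hh.trans hh2) (lt_irrefl _)
          simp [hHdef, hna, h1, h2]
        · by_cases h2 : q.1.2 = a ∧ q.1.1 = b
          · have hna : ¬ G.Adj b a := h2.2 ▸ h2.1 ▸ q.2.2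
            have hna' : ¬ G.Adj a b := fun hh => hna hh.symm
            simp [hHdef, hna', h1, h2]
          · simp [h1, h2]
      exact Submodule.span_le.mpr hgen hmem
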